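/- arXiv:2001.11703 — 4 statements merged into one kernel-verified Lean document; each statement's English description precedes it below -/
import Mathlib

section
/- Let D be a digraph of order n and let W ⊆ V(D) with n ≥ 2|W|. If δ⁰(W) ≥ n/2 + |W| − 1, then for every integer k ≥ 1 and every positive integer partition |W| = n_1 + ⋯ + n_k with n_i ≥ 2 for each i, D contains k pairwise vertex-disjoint directed cycles C_1, …, C_k such that each C_i contains exactly n_i vertices of W (|V(C_i) ∩ W| = n_i). -/
/-- Out-degree of `v` in the digraph with arc relation `A`. -/
noncomputable def outDeg {V : Type*} (A : V → V → Prop) (v : V) : ℕ :=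
  {w | A v w}.ncard

/-- In-degree of `v` in the digraph with arc relation `A`. -/
noncomputable def inDeg {V : Type*} (A : V → V → Prop) (v : V) : ℕ :=
  {w | A w v}.ncard

/-- `l` is the (nonrepeating) vertex list of a directed cycle of the digraph
with arc relation `A`; directed cycles have at least two vertices. -/
def IsDicycle {V : Type*} (A : V → V → Prop) (l : List V) : Prop :=
  2 ≤ l.length ∧ l.Nodup ∧
    ∀ i : Fin l.length,
      A (l.get i) (l.get ⟨((i : ℕ) + 1) % l.length, Nat.mod_lt _ i.pos⟩)

lemma exists_mid {V : Type*} [Fintype V] [DecidableEq V]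
    (A : V → V → Prop) (W : Finset V)
    (hdeg : ∀ v ∈ W,
      (Fintype.card V : ℚ) / 2 + (W.card : ℚ) - 1 ≤ (outDeg A v : ℚ) ∧
      (Fintype.card V : ℚ) / 2 + (W.card : ℚ) - 1 ≤ (inDeg A v : ℚ))
    {w w' : V} (hw : w ∈ W) (hw' : w' ∈ W)
    (F : Finset V) (hF : F.card + 3 ≤ 2 * W.card) :
    ∃ x, x ∉ F ∧ A w x ∧ A x w' := by
  set S : Set V := {z | A w z} with hSdef
  set T : Set V := {z | A z w'} with hTdef
  have hS : S.ncard = outDeg A w := rfl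
  have hT : T.ncard = inDeg A w' := rfl
  have key : Fintype.card V + 2 * W.card ≤ outDeg A w + inDeg A w' + 2 := by
    have h1 := (hdeg w hw).1
    have h2 := (hdeg w' hw').2
    have h3 : (Fintype.card V : ℚ) + 2 * W.card ≤ (outDeg A w : ℚ) + inDeg A w' + 2 := by
      linarith
    exact_mod_cast h3
  have hunion := Set.ncard_union_add_ncard_inter S T (Set.toFinite S) (Set.toFinite T)
  have hle : (S ∪ T).ncard ≤ Fintype.card V := by
    have := Set.ncard_le_ncard (Set.subset_univ (S ∪ T)) (Set.toFinite _)
    simpa [Set.ncard_univ] using this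
  by_contra h
  push_neg at h
  have hsub : S ∩ T ⊆ (F : Set V) := by
    intro z hz
    by_contra hzF
    exact h z (by simpa using hzF) hz.1 hz.2
  have hcard : (S ∩ T).ncard ≤ F.card := by
    have := Set.ncard_le_ncard hsub (F.finite_toSet)
    simpa [Set.ncard_coe_finset] using this
  omega

lemma pick' {V : Type*} [Fintype V] [DecidableEq V]
    (A : V → V → Prop) (hirr : Irreflexive A) (W : Finset V)
    (hdeg : ∀ v ∈ W,
      (Fintype.card V : ℚ) / 2 + (W.card : ℚ) - 1 ≤ (outDeg A v : ℚ) ∧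
      (Fintype.card V : ℚ) / 2 + (W.card : ℚ) - 1 ≤ (inDeg A v : ℚ)) :
    ∀ (N : ℕ) (p : Fin N → V × V) (X : Finset V),
      (∀ j, (p j).1 ∈ W ∧ (p j).2 ∈ W ∧ (p j).1 ≠ (p j).2) →
      (∀ v ∈ X, v ∉ W) → X.card + N ≤ W.card →
      ∃ x : Fin N → V, Function.Injective x ∧
        ∀ j, x j ∉ W ∧ x j ∉ X ∧ A (p j).1 (x j) ∧ A (x j) (p j).2 := by
  intro N
  induction N with
  | zero =>
    intro p X _ _ _
    exact ⟨fun j => j.elim0, fun a => a.elim0, fun j => j.elim0⟩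
  | succ N ih =>
    intro p X hp hX hcard
    obtain ⟨h1, h2, h12⟩ := hp 0
    set q := p 0 with hq
    have hW2 : 2 ≤ W.card := Finset.one_lt_card.mpr ⟨q.1, h1, q.2, h2, h12⟩
    set F : Finset V := ((W.erase q.1).erase q.2) ∪ X with hFdef
    have hmem : q.2 ∈ W.erase q.1 := Finset.mem_erase.mpr ⟨h12.symm, h2⟩
    have hee : ((W.erase q.1).erase q.2).card = W.card - 1 - 1 := by
      rw [Finset.card_erase_of_mem hmem, Finset.card_erase_of_mem h1]
    have hFcard : F.card + 3 ≤ 2 * W.card := by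
      have h4 : F.card ≤ ((W.erase q.1).erase q.2).card + X.card :=
        Finset.card_union_le _ _
      omega
    obtain ⟨x0, hx0F, hx0a, hx0b⟩ := exists_mid A W hdeg h1 h2 F hFcard
    have hx0ne1 : x0 ≠ q.1 := fun h => hirr q.1 (h ▸ hx0a)
    have hx0ne2 : x0 ≠ q.2 := fun h => hirr q.2 (h ▸ hx0b)
    have hx0X : x0 ∉ X := fun h => hx0F (Finset.mem_union_right _ h)
    have hx0W : x0 ∉ W := fun h =>
      hx0F (Finset.mem_union_left _ (Finset.mem_erase.mpr ⟨hx0ne2, Finset.mem_erase.mpr ⟨hx0ne1, h⟩⟩))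
    obtain ⟨x', hinj', hx'⟩ := ih (fun j => p j.succ) (insert x0 X)
      (fun j => hp j.succ)
      (fun v hv => by
        rcases Finset.mem_insert.mp hv with h | h
        · exact h ▸ hx0W
        · exact hX v h)
      (by rw [Finset.card_insert_of_notMem hx0X]; omega)
    refine ⟨Fin.cases x0 x', ?_, ?_⟩
    · intro a b hab
      induction a using Fin.cases with
      | zero =>
        induction b using Fin.cases with
        | zero => rfl
        | succ b =>
          exfalso
          simp only [Fin.cases_zero, Fin.cases_succ] at hab
          exact (hx' b).2.1 (hab ▸ Finset.mem_insert_self x0 X)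
      | succ a =>
        induction b using Fin.cases with
        | zero =>
          exfalso
          simp only [Fin.cases_zero, Fin.cases_succ] at hab
          exact (hx' a).2.1 (hab ▸ Finset.mem_insert_self x0 X)
        | succ b =>
          simp only [Fin.cases_succ] at hab
          exact congrArg Fin.succ (hinj' hab)
    · intro j
      induction j using Fin.cases with
      | zero =>
        simp only [Fin.cases_zero]
        exact ⟨hx0W, hx0X, hx0a, hx0b⟩
      | succ j =>
        simp only [Fin.cases_succ]
        obtain ⟨a, b, c, d⟩ := hx' j
        exact ⟨a, fun h => b (Finset.mem_insert_of_mem h), c, d⟩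

lemma pickJ {V : Type*} [Fintype V] [DecidableEq V]
    (A : V → V → Prop) (hirr : Irreflexive A) (W : Finset V)
    (hdeg : ∀ v ∈ W,
      (Fintype.card V : ℚ) / 2 + (W.card : ℚ) - 1 ≤ (outDeg A v : ℚ) ∧
      (Fintype.card V : ℚ) / 2 + (W.card : ℚ) - 1 ≤ (inDeg A v : ℚ))
    (J : Type*) [Fintype J] (p : J → V × V)
    (hp : ∀ j, (p j).1 ∈ W ∧ (p j).2 ∈ W ∧ (p j).1 ≠ (p j).2)
    (hcard : Fintype.card J ≤ W.card) :
    ∃ x : J → V, Function.Injective x ∧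
      ∀ j, x j ∉ W ∧ A (p j).1 (x j) ∧ A (x j) (p j).2 := by
  classical
  set e := Fintype.equivFin J with he
  obtain ⟨x', hinj', hx'⟩ := pick' A hirr W hdeg (Fintype.card J)
    (fun n => p (e.symm n)) ∅ (fun n => hp (e.symm n)) (by simp) (by simpa using hcard)
  refine ⟨fun j => x' (e j), fun a b hab => e.injective (hinj' hab), fun j => ?_⟩
  obtain ⟨a, _, c, d⟩ := hx' (e j)
  simp only [Equiv.symm_apply_apply] at c d
  exact ⟨a, c, d⟩

/-- **Theorem 3.** If `D` is a digraph of order `n ≥ 2|W|` and `W ⊆ V(D)` satisfies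
`δ⁰(W) ≥ n/2 + |W| − 1`, then for every `k ≥ 1` and every partition
`|W| = n₁ + ⋯ + n_k` with each `nᵢ ≥ 2`, `D` contains `k` pairwise vertex-disjoint
directed cycles `C₁, …, C_k` with `|V(Cᵢ) ∩ W| = nᵢ` for each `i`. -/
theorem stmt2 {V : Type*} [Fintype V] [DecidableEq V]
    (A : V → V → Prop) (hloopless : Irreflexive A)
    (W : Finset V) (hn : 2 * W.card ≤ Fintype.card V)
    (hdeg : ∀ v ∈ W,
      (Fintype.card V : ℚ) / 2 + (W.card : ℚ) - 1 ≤ (outDeg A v : ℚ) ∧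
      (Fintype.card V : ℚ) / 2 + (W.card : ℚ) - 1 ≤ (inDeg A v : ℚ))
    (k : ℕ) (hk : 1 ≤ k) (m : Fin k → ℕ) (hm : ∀ i, 2 ≤ m i)
    (hsum : ∑ i, m i = W.card) :
    ∃ c : Fin k → List V,
      (∀ i, IsDicycle A (c i)) ∧
      (∀ i j, i ≠ j → ∀ v ∈ c i, v ∉ c j) ∧
      (∀ i, ((c i).toFinset ∩ W).card = m i) := by
  classical
  have hmpos : ∀ i : Fin k, 0 < m i := fun i => lt_of_lt_of_le two_pos (hm i)
  -- the index type
  have hcardJ : Fintype.card ((i : Fin k) × Fin (m i)) = Fintype.card {v // v ∈ W} := by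
    simp [Fintype.card_sigma, hsum]
  set e : ((i : Fin k) × Fin (m i)) ≃ {v // v ∈ W} := Fintype.equivOfCardEq hcardJ with he
  set wv : ((i : Fin k) × Fin (m i)) → V := fun j => (e j : V) with hwv
  have hwvW : ∀ j, wv j ∈ W := fun j => (e j).2
  have hwvinj : Function.Injective wv := fun a b hab => e.injective (Subtype.ext hab)
  -- sigma helpers
  have hsig1 : ∀ (i j : Fin k) (a : Fin (m i)) (b : Fin (m j)),
      (⟨i, a⟩ : (i : Fin k) × Fin (m i)) = ⟨j, b⟩ → i = j :=
    fun _ _ _ _ h => congrArg Sigma.fst h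
  have hsig2 : ∀ (i : Fin k) (a b : Fin (m i)),
      (⟨i, a⟩ : (i : Fin k) × Fin (m i)) = ⟨i, b⟩ → a = b := by
    intro i a b h
    injection h with h1 h2
  -- successor map
  set nxt : ∀ i : Fin k, Fin (m i) → Fin (m i) :=
    fun i t => ⟨(t.val + 1) % m i, Nat.mod_lt _ (hmpos i)⟩ with hnxt
  have hnxtne : ∀ (i : Fin k) (t : Fin (m i)), t ≠ nxt i t := by
    intro i t h
    have ht := t.isLt
    have h2 := hm i
    have hv : t.val = (t.val + 1) % m i := congrArg Fin.val h
    rcases Nat.lt_or_ge (t.val + 1) (m i) with hlt | hge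
    · rw [Nat.mod_eq_of_lt hlt] at hv; omega
    · have heq : t.val + 1 = m i := by omega
      rw [heq, Nat.mod_self] at hv
      omega
  -- the pairs
  set p : ((i : Fin k) × Fin (m i)) → V × V :=
    fun j => (wv j, wv ⟨j.1, nxt j.1 j.2⟩) with hp
  have hpgood : ∀ j, (p j).1 ∈ W ∧ (p j).2 ∈ W ∧ (p j).1 ≠ (p j).2 := by
    rintro ⟨i, t⟩
    refine ⟨hwvW _, hwvW _, fun h => ?_⟩
    exact hnxtne i t (hsig2 i t (nxt i t) (hwvinj h))
  obtain ⟨x, hxinj, hx⟩ := pickJ A hloopless W hdeg _ p hpgood (le_of_eq (by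
    simpa [Fintype.card_coe] using hcardJ))
  have hwx : ∀ a b, wv a ≠ x b := fun a b h => (hx b).1 (h ▸ hwvW a)
  -- the cycle vertex functions
  set f : ∀ i : Fin k, Fin (2 * m i) → V := fun i t =>
    if t.val % 2 = 0 then wv ⟨i, ⟨t.val / 2, by have := t.isLt; omega⟩⟩
    else x ⟨i, ⟨t.val / 2, by have := t.isLt; omega⟩⟩ with hf
  have hfe : ∀ (i : Fin k) (t : Fin (2 * m i)), t.val % 2 = 0 →
      ∀ (s : Fin (m i)), s.val = t.val / 2 → f i t = wv ⟨i, s⟩ := by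
    intro i t h s hs
    simp only [hf]
    rw [if_pos h]
    exact congrArg (fun u => wv ⟨i, u⟩) (Fin.ext hs.symm)
  have hfo : ∀ (i : Fin k) (t : Fin (2 * m i)), t.val % 2 = 1 →
      ∀ (s : Fin (m i)), s.val = t.val / 2 → f i t = x ⟨i, s⟩ := by
    intro i t h s hs
    simp only [hf]
    rw [if_neg (by omega)]
    exact congrArg (fun u => x ⟨i, u⟩) (Fin.ext hs.symm)
  have hfcases : ∀ (i : Fin k) (t : Fin (2 * m i)),
      (∃ s : Fin (m i), f i t = wv ⟨i, s⟩) ∨ (∃ s : Fin (m i), f i t = x ⟨i, s⟩) := by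
    intro i t
    rcases Nat.even_or_odd t.val with hev | hod
    · left
      exact ⟨⟨t.val / 2, by have := t.isLt; omega⟩, hfe i t (Nat.even_iff.mp hev) _ rfl⟩
    · right
      exact ⟨⟨t.val / 2, by have := t.isLt; omega⟩, hfo i t (Nat.odd_iff.mp hod) _ rfl⟩
  have hfinj : ∀ i : Fin k, Function.Injective (f i) := by
    intro i s t h
    have hs2 := s.isLt
    have ht2 := t.isLt
    rcases Nat.even_or_odd s.val with hev | hod <;>
      rcases Nat.even_or_odd t.val with hev' | hod'
    · rw [hfe i s (Nat.even_iff.mp hev) ⟨s.val / 2, by omega⟩ rfl,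
        hfe i t (Nat.even_iff.mp hev') ⟨t.val / 2, by omega⟩ rfl] at h
      have := congrArg Fin.val (hsig2 i _ _ (hwvinj h))
      simp only at this
      have h1 := Nat.even_iff.mp hev
      have h2 := Nat.even_iff.mp hev'
      exact Fin.ext (by omega)
    · rw [hfe i s (Nat.even_iff.mp hev) ⟨s.val / 2, by omega⟩ rfl,
        hfo i t (Nat.odd_iff.mp hod') ⟨t.val / 2, by omega⟩ rfl] at h
      exact absurd h (hwx _ _)
    · rw [hfo i s (Nat.odd_iff.mp hod) ⟨s.val / 2, by omega⟩ rfl,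
        hfe i t (Nat.even_iff.mp hev') ⟨t.val / 2, by omega⟩ rfl] at h
      exact absurd h.symm (hwx _ _)
    · rw [hfo i s (Nat.odd_iff.mp hod) ⟨s.val / 2, by omega⟩ rfl,
        hfo i t (Nat.odd_iff.mp hod') ⟨t.val / 2, by omega⟩ rfl] at h
      have := congrArg Fin.val (hsig2 i _ _ (hxinj h))
      simp only at this
      have h1 := Nat.odd_iff.mp hod
      have h2 := Nat.odd_iff.mp hod'
      exact Fin.ext (by omega)
  refine ⟨fun i => List.ofFn (f i), ?_, ?_, ?_⟩
  · -- each is a dicycle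
    intro i
    show IsDicycle A (List.ofFn (f i))
    have hlen : (List.ofFn (f i)).length = 2 * m i := List.length_ofFn
    have hget : ∀ (a : ℕ) (h : a < (List.ofFn (f i)).length),
        (List.ofFn (f i)).get ⟨a, h⟩ = f i ⟨a, by rw [hlen] at h; exact h⟩ := by
      intro a h
      rw [List.get_eq_getElem, List.getElem_ofFn]
    have harc : ∀ (a b : ℕ) (ha : a < (List.ofFn (f i)).length)
        (hb : b < (List.ofFn (f i)).length), b = (a + 1) % (2 * m i) →
        A ((List.ofFn (f i)).get ⟨a, ha⟩) ((List.ofFn (f i)).get ⟨b, hb⟩) := by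
      intro a b ha hb hbv
      rw [hget a ha, hget b hb]
      have ha' : a < 2 * m i := by rw [hlen] at ha; exact ha
      by_cases hpar : a % 2 = 0
      · have hlt : a + 1 < 2 * m i := by omega
        have hbeq : b = a + 1 := by rw [hbv]; exact Nat.mod_eq_of_lt hlt
        rw [hfe i ⟨a, by rw [hlen] at ha; exact ha⟩ hpar ⟨a / 2, by omega⟩ rfl,
          hfo i ⟨b, by rw [hlen] at hb; exact hb⟩ (by show b % 2 = 1; omega)
            ⟨a / 2, by omega⟩ (by show a / 2 = b / 2; omega)]
        exact (hx ⟨i, ⟨a / 2, by omega⟩⟩).2.1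
      · have hpar1 : a % 2 = 1 := by omega
        have hrw2 : a + 1 = 2 * (a / 2 + 1) := by omega
        have hm2 : (a + 1) % (2 * m i) = 2 * ((a / 2 + 1) % m i) := by
          rw [hrw2, Nat.mul_mod_mul_left]
        have hmlt : (a / 2 + 1) % m i < m i := Nat.mod_lt _ (hmpos i)
        have hbeq : b = 2 * ((a / 2 + 1) % m i) := by rw [hbv]; exact hm2
        rw [hfo i ⟨a, by rw [hlen] at ha; exact ha⟩ hpar1 ⟨a / 2, by omega⟩ rfl,
          hfe i ⟨b, by rw [hlen] at hb; exact hb⟩ (by show b % 2 = 0; omega)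
            ⟨(a / 2 + 1) % m i, hmlt⟩ (by show (a / 2 + 1) % m i = b / 2; omega)]
        exact (hx ⟨i, ⟨a / 2, by omega⟩⟩).2.2
    refine ⟨by rw [hlen]; have := hm i; omega, List.nodup_ofFn.mpr (hfinj i), ?_⟩
    intro t
    exact harc (t : ℕ) (((t : ℕ) + 1) % (List.ofFn (f i)).length) t.isLt
      (Nat.mod_lt _ t.pos) (congrArg (fun L => ((t : ℕ) + 1) % L) hlen)
  · -- disjointness
    intro i j hij v hvi hvj
    rw [List.mem_ofFn] at hvi hvj
    obtain ⟨a, ha⟩ := hvi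
    obtain ⟨b, hb⟩ := hvj
    have hab : f i a = f j b := ha.trans hb.symm
    rcases hfcases i a with ⟨s, hs⟩ | ⟨s, hs⟩ <;> rcases hfcases j b with ⟨u, hu⟩ | ⟨u, hu⟩
    · exact hij (hsig1 _ _ _ _ (hwvinj ((hs.symm.trans hab).trans hu)))
    · exact hwx _ _ ((hs.symm.trans hab).trans hu)
    · exact hwx _ _ (((hs.symm.trans hab).trans hu).symm)
    · exact hij (hsig1 _ _ _ _ (hxinj ((hs.symm.trans hab).trans hu)))
  · -- intersection cardinality
    intro i
    have himg : (List.ofFn (f i)).toFinset ∩ W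
        = Finset.image (fun t : Fin (m i) => wv ⟨i, t⟩) Finset.univ := by
      ext v
      simp only [Finset.mem_inter, List.mem_toFinset, List.mem_ofFn, Finset.mem_image,
        Finset.mem_univ, true_and]
      constructor
      · rintro ⟨⟨t, rfl⟩, hvW⟩
        rcases hfcases i t with ⟨s, hs⟩ | ⟨s, hs⟩
        · exact ⟨s, hs.symm⟩
        · rw [hs] at hvW
          exact absurd hvW (hx _).1
      · rintro ⟨t, rfl⟩
        refine ⟨⟨⟨2 * t.val, by have := t.isLt; omega⟩, ?_⟩, hwvW _⟩
        refine hfe i _ (by simp) t ?_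
        show (t : ℕ) = 2 * (t : ℕ) / 2
        omega
    rw [himg, Finset.card_image_of_injective _ (fun a b hab => hsig2 i a b (hwvinj hab)),
      Finset.card_univ, Fintype.card_fin]
end

section
/- Let D be a digraph of order n and let W ⊆ V(D) with δ⁰(W) ≥ n/2. Then for any two distinct vertices u, v ∈ W, there exist a directed path P_1 of length at most 2 from u to v and a directed path P_2 of length at most 2 from v to u such that P_1 and P_2 are internally vertex-disjoint. -/
lemma key_inter {V : Type*} [Fintype V] {A : V → V → Prop} (hl : Irreflexive A)
    {x y : V} (hxy : x ≠ y) (hnA : ¬ A x y)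
    (hx : (Fintype.card V : ℚ) / 2 ≤ (outDeg A x : ℚ))
    (hy : (Fintype.card V : ℚ) / 2 ≤ (inDeg A y : ℚ)) :
    2 ≤ {w | A x w ∧ A w y}.ncard := by
  classical
  set S : Set V := {w | A x w} with hS
  set T : Set V := {w | A w y} with hT
  have hSfin : S.Finite := Set.toFinite _
  have hTfin : T.Finite := Set.toFinite _
  have hsumQ : (Fintype.card V : ℚ) ≤ (S.ncard : ℚ) + (T.ncard : ℚ) := by
    have := hx; have := hy
    unfold outDeg at hx; unfold inDeg at hy
    linarith
  have hsum : Fintype.card V ≤ S.ncard + T.ncard := by exact_mod_cast hsumQ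
  have heq : S.ncard + T.ncard = (S ∪ T).ncard + (S ∩ T).ncard :=
    (Set.ncard_union_add_ncard_inter S T hSfin hTfin).symm
  have hsub : S ∪ T ⊆ ({x, y} : Set V)ᶜ := by
    intro w hw
    rcases hw with hw | hw
    · simp only [Set.mem_compl_iff, Set.mem_insert_iff, Set.mem_singleton_iff]
      push_neg
      have hw' : A x w := hw
      exact ⟨fun h => hl x (h ▸ hw'), fun h => hnA (h ▸ hw')⟩
    · simp only [Set.mem_compl_iff, Set.mem_insert_iff, Set.mem_singleton_iff]
      push_neg
      have hw' : A w y := hw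
      exact ⟨fun h => hnA (h ▸ hw'), fun h => hl y (h ▸ hw')⟩
  have hpair : ({x, y} : Set V).ncard = 2 := Set.ncard_pair hxy
  have hcompl2 : ({x, y} : Set V).ncard + (({x, y} : Set V)ᶜ).ncard = Fintype.card V := by
    rw [Set.ncard_add_ncard_compl, Nat.card_eq_fintype_card]
  have hle : (S ∪ T).ncard ≤ (({x, y} : Set V)ᶜ).ncard :=
    Set.ncard_le_ncard hsub (Set.toFinite _)
  have hinter : {w | A x w ∧ A w y} = S ∩ T := rfl
  rw [hinter]
  omega

lemma key_pick {V : Type*} [Fintype V] {A : V → V → Prop} (hl : Irreflexive A)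
    {x y : V} (hxy : x ≠ y) (hnA : ¬ A x y)
    (hx : (Fintype.card V : ℚ) / 2 ≤ (outDeg A x : ℚ))
    (hy : (Fintype.card V : ℚ) / 2 ≤ (inDeg A y : ℚ)) (z : V) :
    ∃ w, A x w ∧ A w y ∧ w ≠ z := by
  have h2 := key_inter hl hxy hnA hx hy
  by_contra h
  push_neg at h
  have hsub : {w | A x w ∧ A w y} ⊆ {z} := by
    intro w hw
    rcases Classical.em (w = z) with rfl | hne
    · rfl
    · exact absurd hne (by simpa using h w hw.1 hw.2)
  have := Set.ncard_le_ncard hsub (Set.finite_singleton z)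
  rw [Set.ncard_singleton] at this
  omega

/-- **Claim 6.1.** If `D` is a digraph of order `n`, `W ⊆ V(D)` with `δ⁰(W) ≥ n/2`,
then for any two distinct `u, v ∈ W` there are a directed path `P₁` from `u` to `v`
and a directed path `P₂` from `v` to `u`, each of length at most `2` (i.e. with at
most `3` vertices), which are internally vertex-disjoint. -/
theorem stmt11 {V : Type*} [Fintype V] (A : V → V → Prop) (hloopless : Irreflexive A)
    (W : Finset V)
    (hdeg : ∀ v ∈ W, (Fintype.card V : ℚ) / 2 ≤ (outDeg A v : ℚ) ∧
      (Fintype.card V : ℚ) / 2 ≤ (inDeg A v : ℚ))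
    (u v : V) (hu : u ∈ W) (hv : v ∈ W) (huv : u ≠ v) :
    ∃ l₁ l₂ : List V,
      l₁.Nodup ∧ l₁.Chain' A ∧ l₁.head? = some u ∧ l₁.getLast? = some v ∧
        l₁.length ≤ 3 ∧
      l₂.Nodup ∧ l₂.Chain' A ∧ l₂.head? = some v ∧ l₂.getLast? = some u ∧
        l₂.length ≤ 3 ∧
      (∀ w ∈ l₁, w ∈ l₂ → w = u ∨ w = v) := by
  classical
  obtain ⟨hu_out, hu_in⟩ := hdeg u hu
  obtain ⟨hv_out, hv_in⟩ := hdeg v hv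
  rcases Classical.em (A u v) with huv1 | huv1 <;> rcases Classical.em (A v u) with huv2 | huv2
  · -- both arcs
    refine ⟨[u, v], [v, u], ?_, ?_, rfl, rfl, ?_, ?_, ?_, rfl, rfl, ?_, ?_⟩ <;>
      simp_all [List.Chain', List.isChain_cons_cons, Ne.symm huv]
  · -- A u v, ¬ A v u : l₂ = [v, w, u]
    obtain ⟨w, hvw, hwu, -⟩ := key_pick hloopless huv.symm huv2 hv_out hu_in u
    have hwu' : w ≠ u := fun h => hloopless u (h ▸ hwu)
    have hwv' : w ≠ v := fun h => hloopless v (h ▸ hvw)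
    refine ⟨[u, v], [v, w, u], ?_, ?_, rfl, rfl, ?_, ?_, ?_, rfl, rfl, ?_, ?_⟩
    · simp [huv]
    · simp [List.Chain', List.isChain_cons_cons, huv1]
    · simp
    · simp [List.nodup_cons, hwv'.symm, hwu', huv.symm, Ne.symm]
    · simp [List.Chain', List.isChain_cons_cons, hvw, hwu]
    · simp
    · intro z hz _
      simp only [List.mem_cons, List.not_mem_nil, or_false] at hz
      tauto
  · -- ¬ A u v, A v u : l₁ = [u, w, v]
    obtain ⟨w, huw, hwv, -⟩ := key_pick hloopless huv huv1 hu_out hv_in u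
    have hwu' : w ≠ u := fun h => hloopless u (h ▸ huw)
    have hwv' : w ≠ v := fun h => hloopless v (h ▸ hwv)
    refine ⟨[u, w, v], [v, u], ?_, ?_, rfl, rfl, ?_, ?_, ?_, rfl, rfl, ?_, ?_⟩
    · simp [List.nodup_cons, hwu'.symm, huv, hwv']
    · simp [List.Chain', List.isChain_cons_cons, huw, hwv]
    · simp
    · simp [huv.symm]
    · simp [List.Chain', List.isChain_cons_cons, huv2]
    · simp
    · intro z _ hz
      simp only [List.mem_cons, List.not_mem_nil, or_false] at hz
      tauto
  · -- neither arc : l₁ = [u, w₁, v], l₂ = [v, w₂, u]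
    obtain ⟨w₁, huw, hwv, -⟩ := key_pick hloopless huv huv1 hu_out hv_in u
    obtain ⟨w₂, hvw, hwu, hw12⟩ := key_pick hloopless huv.symm huv2 hv_out hu_in w₁
    have h1u : w₁ ≠ u := fun h => hloopless u (h ▸ huw)
    have h1v : w₁ ≠ v := fun h => hloopless v (h ▸ hwv)
    have h2u : w₂ ≠ u := fun h => hloopless u (h ▸ hwu)
    have h2v : w₂ ≠ v := fun h => hloopless v (h ▸ hvw)
    refine ⟨[u, w₁, v], [v, w₂, u], ?_, ?_, rfl, rfl, ?_, ?_, ?_, rfl, rfl, ?_, ?_⟩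
    · simp [List.nodup_cons, h1u.symm, huv, h1v]
    · simp [List.Chain', List.isChain_cons_cons, huw, hwv]
    · simp
    · simp [List.nodup_cons, h2v.symm, huv.symm, h2u]
    · simp [List.Chain', List.isChain_cons_cons, hvw, hwu]
    · simp
    · intro z hz1 hz2
      simp only [List.mem_cons, List.not_mem_nil, or_false] at hz1 hz2
      rcases hz1 with rfl | rfl | rfl
      · left; rfl
      · rcases hz2 with rfl | rfl | rfl
        · exact absurd rfl h1v
        · exact absurd rfl hw12.symm
        · exact absurd rfl h1u
      · right; rfl
end

section
/- For every integer k ≥ 1, there exists a digraph D of order n = 16k − 2 with δ⁰(D) = 12k − 3 (so δ⁰(D) > (3n−3)/4 − 1) such that D does not contain 8k − 1 pairwise vertex-disjoint directed cycles of order 2. Consequently, the minimum semi-degree bound (3n−3)/4 for the existence of an arbitrary cycle-factor cannot be weakened by one. -/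
/-- The minimum semi-degree `δ⁰(D) = min {δ⁺(D), δ⁻(D)}` of the digraph with arc
relation `A`. -/
noncomputable def minSemiDeg {V : Type*} (A : V → V → Prop) : ℕ :=
  sInf (Set.range (outDeg A) ∪ Set.range (inDeg A))

open Finset

/-- Arc condition among the "singleton" vertices: rotational orientation. -/
def scond (k a b : ℕ) : Prop :=
  (a < b ∧ b < a + 4*k) ∨ (b + 8*k < a + 4*k ∧ a < b + 8*k)

instance (k a b : ℕ) : Decidable (scond k a b) := by unfold scond; infer_instance

/-- The extremal digraph: vertices with value `< 8k-2` have digons to everybody,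
the remaining `8k` vertices carry a rotational orientation. -/
def Arc (k : ℕ) (u v : Fin (16*k-2)) : Prop :=
  u ≠ v ∧ (u.val < 8*k-2 ∨ v.val < 8*k-2 ∨ scond k u.val v.val)

instance (k : ℕ) (u v : Fin (16*k-2)) : Decidable (Arc k u v) := by
  unfold Arc; infer_instance

lemma countC (k : ℕ) :
    #(univ.filter (fun v : Fin (16*k-2) => v.val < 8*k-2)) = 8*k-2 := by
  refine (Finset.card_bij' (fun v _ => v.val)
    (fun a ha => (⟨a, by simp at ha; omega⟩ : Fin (16*k-2)))
    ?_ ?_ ?_ ?_).trans (Finset.card_range _)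
  · intro v hv; simp at hv ⊢; omega
  · intro a ha; simp at ha ⊢; omega
  · intro v hv; rfl
  · intro a ha; rfl

lemma countOutSing (k : ℕ) (hk : 1 ≤ k) (u : Fin (16*k-2)) (hu : 8*k-2 ≤ u.val) :
    #(univ.filter (fun v : Fin (16*k-2) => 8*k-2 ≤ v.val ∧ scond k u.val v.val))
      = 4*k-1 := by
  have hun := u.isLt
  refine (Finset.card_bij'
    (fun v _ => if u.val < v.val then v.val - u.val else v.val + 8*k - u.val)
    (fun d hd => (⟨if u.val + d < 16*k-2 then u.val + d else u.val + d - 8*k,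
      by simp [Finset.mem_Ico] at hd; split_ifs <;> omega⟩ : Fin (16*k-2)))
    ?_ ?_ ?_ ?_).trans (Nat.card_Ico 1 (4*k))
  · intro v hv
    rw [Finset.mem_filter] at hv
    simp only [Finset.mem_filter, Finset.mem_univ, true_and, scond] at hv
    simp only [Finset.mem_Ico]
    split_ifs <;> omega
  · intro d hd
    simp only [Finset.mem_Ico] at hd
    rw [Finset.mem_filter]
    simp only [Finset.mem_filter, Finset.mem_univ, true_and, scond]
    try dsimp only
    split_ifs <;> omega
  · intro v hv
    rw [Finset.mem_filter] at hv
    simp only [Finset.mem_filter, Finset.mem_univ, true_and, scond] at hv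
    apply Fin.ext
    try dsimp only
    split_ifs <;> omega
  · intro d hd
    simp only [Finset.mem_Ico] at hd
    try dsimp only
    split_ifs <;> omega

lemma countInSing (k : ℕ) (hk : 1 ≤ k) (u : Fin (16*k-2)) (hu : 8*k-2 ≤ u.val) :
    #(univ.filter (fun w : Fin (16*k-2) => 8*k-2 ≤ w.val ∧ scond k w.val u.val))
      = 4*k-1 := by
  have hun := u.isLt
  refine (Finset.card_bij'
    (fun w _ => if w.val < u.val then u.val - w.val else u.val + 8*k - w.val)
    (fun d hd => (⟨if 8*k-2 + d ≤ u.val then u.val - d else u.val + 8*k - d,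
      by simp [Finset.mem_Ico] at hd; split_ifs <;> omega⟩ : Fin (16*k-2)))
    ?_ ?_ ?_ ?_).trans (Nat.card_Ico 1 (4*k))
  · intro w hw
    rw [Finset.mem_filter] at hw
    simp only [Finset.mem_filter, Finset.mem_univ, true_and, scond] at hw
    simp only [Finset.mem_Ico]
    split_ifs <;> omega
  · intro d hd
    simp only [Finset.mem_Ico] at hd
    rw [Finset.mem_filter]
    simp only [Finset.mem_filter, Finset.mem_univ, true_and, scond]
    try dsimp only
    split_ifs <;> omega
  · intro w hw
    rw [Finset.mem_filter] at hw
    simp only [Finset.mem_filter, Finset.mem_univ, true_and, scond] at hw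
    apply Fin.ext
    try dsimp only
    split_ifs <;> omega
  · intro d hd
    simp only [Finset.mem_Ico] at hd
    try dsimp only
    split_ifs <;> omega

lemma outDeg_eq (k : ℕ) (hk : 1 ≤ k) (u : Fin (16*k-2)) :
    outDeg (Arc k) u = if u.val < 8*k-2 then 16*k-3 else 12*k-3 := by
  have hun := u.isLt
  have hset : {w | Arc k u w} = ↑(univ.filter (fun w => Arc k u w)) := by
    ext w; simp
  rw [outDeg, hset, Set.ncard_coe_finset]
  split_ifs with hu
  · have : univ.filter (fun w => Arc k u w) = univ.erase u := by
      ext w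
      simp only [Finset.mem_filter, Finset.mem_univ, true_and, Finset.mem_erase,
        and_true, Arc, Ne, Fin.ext_iff, scond]
      omega
    rw [this, Finset.card_erase_of_mem (mem_univ u), Finset.card_univ,
      Fintype.card_fin]
    omega
  · push_neg at hu
    have : univ.filter (fun w => Arc k u w) =
        univ.filter (fun v : Fin (16*k-2) => v.val < 8*k-2) ∪
        univ.filter (fun v : Fin (16*k-2) => 8*k-2 ≤ v.val ∧ scond k u.val v.val) := by
      ext v
      have hvn := v.isLt
      rw [Finset.mem_union, Finset.mem_filter, Finset.mem_filter, Finset.mem_filter]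
      simp only [Finset.mem_filter, Finset.mem_univ, true_and, Finset.mem_union,
        Arc, Ne, Fin.ext_iff, scond]
      omega
    rw [this, Finset.card_union_of_disjoint, countC, countOutSing k hk u hu]
    · omega
    · rw [Finset.disjoint_left]
      intro v h1 h2
      simp only [Finset.mem_filter] at h1 h2
      omega

lemma inDeg_eq (k : ℕ) (hk : 1 ≤ k) (u : Fin (16*k-2)) :
    inDeg (Arc k) u = if u.val < 8*k-2 then 16*k-3 else 12*k-3 := by
  have hun := u.isLt
  have hset : {w | Arc k w u} = ↑(univ.filter (fun w => Arc k w u)) := by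
    ext w; simp
  rw [inDeg, hset, Set.ncard_coe_finset]
  split_ifs with hu
  · have : univ.filter (fun w => Arc k w u) = univ.erase u := by
      ext w
      simp only [Finset.mem_filter, Finset.mem_univ, true_and, Finset.mem_erase,
        and_true, Arc, Ne, Fin.ext_iff, scond]
      omega
    rw [this, Finset.card_erase_of_mem (mem_univ u), Finset.card_univ,
      Fintype.card_fin]
    omega
  · push_neg at hu
    have : univ.filter (fun w => Arc k w u) =
        univ.filter (fun v : Fin (16*k-2) => v.val < 8*k-2) ∪
        univ.filter (fun w : Fin (16*k-2) => 8*k-2 ≤ w.val ∧ scond k w.val u.val) := by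
      ext v
      have hvn := v.isLt
      rw [Finset.mem_union, Finset.mem_filter, Finset.mem_filter, Finset.mem_filter]
      simp only [Finset.mem_filter, Finset.mem_univ, true_and, Finset.mem_union,
        Arc, Ne, Fin.ext_iff, scond]
      omega
    rw [this, Finset.card_union_of_disjoint, countC, countInSing k hk u hu]
    · omega
    · rw [Finset.disjoint_left]
      intro v h1 h2
      simp only [Finset.mem_filter] at h1 h2
      omega

lemma dicycle_two {V : Type*} {A : V → V → Prop} {x y : V}
    (h : IsDicycle A [x, y]) : A x y ∧ A y x := by
  obtain ⟨-, -, h⟩ := h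
  constructor
  · simpa using h ⟨0, by simp⟩
  · simpa using h ⟨1, by simp⟩

/-- **Sharpness of Theorem 1.** For every `k ≥ 1` there is a digraph `D` of order
`n = 16k − 2` with `δ⁰(D) = 12k − 3` (note `12k − 3 > (3n−3)/4 − 1`) which does not
contain `8k − 1` pairwise vertex-disjoint directed cycles of order `2`. -/
theorem stmt15 (k : ℕ) (hk : 1 ≤ k) :
    ∃ A : Fin (16 * k - 2) → Fin (16 * k - 2) → Prop,
      Irreflexive A ∧
      minSemiDeg A = 12 * k - 3 ∧
      ((3 * (16 * (k : ℚ) - 2) - 3) / 4 - 1 < 12 * (k : ℚ) - 3) ∧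
      ¬ ∃ c : Fin (8 * k - 1) → List (Fin (16 * k - 2)),
          (∀ i, IsDicycle A (c i) ∧ (c i).length = 2) ∧
          (∀ i j, i ≠ j → ∀ v ∈ c i, v ∉ c j) := by
  refine ⟨Arc k, fun u h => h.1 rfl, ?_, by linarith, ?_⟩
  · -- minimum semi-degree
    have hmem : (12*k-3) ∈ Set.range (outDeg (Arc k)) ∪ Set.range (inDeg (Arc k)) := by
      left
      refine ⟨⟨8*k-2, by omega⟩, ?_⟩
      rw [outDeg_eq k hk]
      simp
    refine le_antisymm (Nat.sInf_le hmem) (le_csInf ⟨_, hmem⟩ ?_)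
    rintro x (⟨u, rfl⟩ | ⟨u, rfl⟩)
    · rw [outDeg_eq k hk]; split_ifs <;> omega
    · rw [inDeg_eq k hk]; split_ifs <;> omega
  · -- no 8k-1 disjoint 2-cycles
    rintro ⟨c, hc, hdis⟩
    classical
    -- every vertex is covered
    have hcard : (univ.biUnion (fun i => (c i).toFinset)).card = 16*k-2 := by
      rw [Finset.card_biUnion]
      · rw [Finset.sum_congr rfl (fun i _ => by
          rw [List.toFinset_card_of_nodup (hc i).1.2.1, (hc i).2]),
          Finset.sum_const, Finset.card_univ, Fintype.card_fin, smul_eq_mul]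
        omega
      · intro i _ j _ hij
        rw [Function.onFun, Finset.disjoint_left]
        intro v hv hv'
        exact hdis i j hij v (List.mem_toFinset.mp hv) (List.mem_toFinset.mp hv')
    have hF : (univ.biUnion (fun i => (c i).toFinset)) = univ :=
      Finset.eq_univ_of_card _ (by rw [hcard, Fintype.card_fin])
    have hcover : ∀ v : Fin (16*k-2), ∃ i, v ∈ c i := by
      intro v
      have : v ∈ univ.biUnion (fun i => (c i).toFinset) := hF ▸ mem_univ v
      simpa [List.mem_toFinset] using this
    -- each cycle contains at most one vertex with value ≥ 8k-2
    have hone : ∀ i, ∀ v ∈ c i, ∀ w ∈ c i, v ≠ w →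
        v.val < 8*k-2 ∨ w.val < 8*k-2 := by
      intro i v hv w hw hvw
      obtain ⟨x, y, hxy⟩ := List.length_eq_two.mp (hc i).2
      have hd := dicycle_two (hxy ▸ (hc i).1)
      have harc : x.val < 8*k-2 ∨ y.val < 8*k-2 := by
        by_contra h
        push_neg at h
        obtain ⟨⟨-, h1⟩, ⟨-, h2⟩⟩ := hd
        have hx := x.isLt
        have hy := y.isLt
        simp only [scond] at h1 h2
        omega
      rw [hxy] at hv hw
      simp only [List.mem_cons, List.not_mem_nil, or_false] at hv hw
      rcases hv with rfl | rfl <;> rcases hw with rfl | rfl <;> first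
        | exact absurd rfl hvw
        | tauto
    -- injection from the 8k singleton vertices into the 8k-1 cycles
    let f : Fin (16*k-2) → Fin (8*k-1) := fun v => (hcover v).choose
    have hf : ∀ v, v ∈ c (f v) := fun v => (hcover v).choose_spec
    have hS : #(univ.filter (fun v : Fin (16*k-2) => 8*k-2 ≤ v.val)) = 8*k := by
      have h1 := Finset.card_filter_add_card_filter_not
        (s := (univ : Finset (Fin (16*k-2)))) (p := fun v => v.val < 8*k-2)
      rw [countC, Finset.card_univ, Fintype.card_fin] at h1
      have h2 : univ.filter (fun v : Fin (16*k-2) => ¬ v.val < 8*k-2) =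
          univ.filter (fun v : Fin (16*k-2) => 8*k-2 ≤ v.val) := by
        apply Finset.filter_congr; intro v _; simp
      rw [h2] at h1
      omega
    have hinj : Set.InjOn f
        ↑(univ.filter (fun v : Fin (16*k-2) => 8*k-2 ≤ v.val)) := by
      intro v hv w hw hfvw
      by_contra hvw
      simp only [Finset.coe_filter, Set.mem_setOf_eq] at hv hw
      have hw' : w ∈ c (f v) := hfvw ▸ hf w
      have := hone (f v) v (hf v) w hw' hvw
      omega
    have hle := Finset.card_le_card_of_injOn f (fun v _ => mem_univ (f v)) hinj
    rw [hS, Finset.card_univ, Fintype.card_fin] at hle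
    omega
end

section
/- For every integer k ≥ 1, let D be the digraph of order n = 3k with vertex set X ∪ Y, where |X| = 2k − 1 and |Y| = k + 1, such that X induces a complete digraph (both arcs uv and vu present for every pair of distinct vertices u, v ∈ X), Y is an independent set (no arcs between vertices of Y), and all arcs in both directions between every vertex of X and every vertex of Y are present. Then δ⁰(D) = 2k − 1 = 2n/3 − 1, but D does not contain k pairwise vertex-disjoint directed cycles each of order at least 3. -/
/-- The digraph `D₂` on `X ∪ Y` with `X = K^*_{2k−1}` (a complete digraph),
`Y` an independent set of size `k + 1`, and all arcs in both directions between
`X` and `Y`. -/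
def D2 (k : ℕ) : (Fin (2 * k - 1) ⊕ Fin (k + 1)) → (Fin (2 * k - 1) ⊕ Fin (k + 1)) → Prop
  | Sum.inl a, Sum.inl b => a ≠ b
  | Sum.inl _, Sum.inr _ => True
  | Sum.inr _, Sum.inl _ => True
  | Sum.inr _, Sum.inr _ => False

lemma D2_symm (k : ℕ) (u v : Fin (2 * k - 1) ⊕ Fin (k + 1)) : D2 k u v ↔ D2 k v u := by
  cases u <;> cases v <;> simp [D2] <;> exact ne_comm

lemma natcard (k : ℕ) (hk : 1 ≤ k) :
    Nat.card (Fin (2 * k - 1) ⊕ Fin (k + 1)) = 3 * k := by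
  simp [Nat.card_sum]; omega

lemma outDeg_inl (k : ℕ) (hk : 1 ≤ k) (a : Fin (2 * k - 1)) :
    outDeg (D2 k) (Sum.inl a) = 3 * k - 1 := by
  have hset : {w | D2 k (Sum.inl a) w} = ({Sum.inl a} : Set (Fin (2 * k - 1) ⊕ Fin (k + 1)))ᶜ := by
    ext w
    cases w with
    | inl b =>
        simp only [Set.mem_setOf_eq, Set.mem_compl_iff, Set.mem_singleton_iff, D2]
        constructor
        · intro h h'; exact h (Sum.inl.inj h').symm
        · intro h h'; exact h (by rw [h'])
    | inr b => simp [D2]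
  unfold outDeg
  rw [hset]
  have h1 := Set.ncard_add_ncard_compl ({Sum.inl a} : Set (Fin (2 * k - 1) ⊕ Fin (k + 1)))
  rw [Set.ncard_singleton, natcard k hk] at h1
  omega

lemma outDeg_inr (k : ℕ) (hk : 1 ≤ k) (b : Fin (k + 1)) :
    outDeg (D2 k) (Sum.inr b) = 2 * k - 1 := by
  have hset : {w | D2 k (Sum.inr b) w} = Set.range (Sum.inl : Fin (2*k-1) → _) := by
    ext w; cases w <;> simp [D2]
  unfold outDeg
  rw [hset, ← Set.image_univ, Set.ncard_image_of_injective _ Sum.inl_injective,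
    Set.ncard_univ, Nat.card_eq_fintype_card, Fintype.card_fin]

lemma inDeg_eq_s16 (k : ℕ) (v : Fin (2 * k - 1) ⊕ Fin (k + 1)) :
    inDeg (D2 k) v = outDeg (D2 k) v := by
  unfold inDeg outDeg
  congr 1
  ext w
  exact D2_symm k w v

lemma minSemi (k : ℕ) (hk : 1 ≤ k) : minSemiDeg (D2 k) = 2 * k - 1 := by
  have hx : (0 : Fin (k+1)) = 0 := rfl
  have hmem : (2 * k - 1) ∈ Set.range (outDeg (D2 k)) ∪ Set.range (inDeg (D2 k)) :=
    Or.inl ⟨Sum.inr 0, outDeg_inr k hk 0⟩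
  have hval : ∀ v, outDeg (D2 k) v = 3 * k - 1 ∨ outDeg (D2 k) v = 2 * k - 1 := by
    intro v
    cases v with
    | inl a => exact Or.inl (outDeg_inl k hk a)
    | inr b => exact Or.inr (outDeg_inr k hk b)
  have hlb : ∀ m ∈ Set.range (outDeg (D2 k)) ∪ Set.range (inDeg (D2 k)), 2 * k - 1 ≤ m := by
    rintro m (⟨v, rfl⟩ | ⟨v, rfl⟩)
    · rcases hval v with h | h <;> omega
    · rw [inDeg_eq_s16]; rcases hval v with h | h <;> omega
  unfold minSemiDeg
  exact le_antisymm (Nat.sInf_le hmem) (le_csInf ⟨_, hmem⟩ hlb)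

lemma mod_ne_one (n p : ℕ) (hn : 2 ≤ n) (hp : p < n) : (p + 1) % n ≠ p := by
  rcases Nat.lt_or_ge (p + 1) n with h | h
  · rw [Nat.mod_eq_of_lt h]; omega
  · have : p + 1 = n := by omega
    rw [this, Nat.mod_self]; omega

lemma mod_ne_two (n p : ℕ) (hn : 3 ≤ n) (hp : p < n) : (p + 2) % n ≠ p := by
  rcases Nat.lt_or_ge (p + 2) n with h | h
  · rw [Nat.mod_eq_of_lt h]; omega
  · rcases Nat.lt_or_ge (p + 2) (2 * n) with h2 | h2
    · have : (p + 2) % n = p + 2 - n := by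
        rw [Nat.mod_eq_sub_mod h, Nat.mod_eq_of_lt (by omega)]
      omega
    · omega

/-- Every dicycle of length ≥ 3 in D2 contains two distinct X-vertices. -/
lemma two_inl (k : ℕ) (l : List (Fin (2 * k - 1) ⊕ Fin (k + 1)))
    (hl : IsDicycle (D2 k) l) (h3 : 3 ≤ l.length) :
    ∃ a b : Fin (2 * k - 1), a ≠ b ∧ Sum.inl a ∈ l ∧ Sum.inl b ∈ l := by
  obtain ⟨h2, hnd, harc⟩ := hl
  set n := l.length with hn
  -- step 1: find an index p with l.get p = inl _
  have step1 : ∃ p : Fin n, ∃ a, l.get p = Sum.inl a := by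
    by_contra hcon
    push_neg at hcon
    have h0 : (0:ℕ) < n := by omega
    have harc0 := harc ⟨0, h0⟩
    set q : Fin n := ⟨(0 + 1) % n, Nat.mod_lt _ h0⟩
    rcases hx0 : l.get ⟨0, h0⟩ with a | y
    · exact hcon ⟨0, h0⟩ a hx0
    rcases hx1 : l.get q with a | y'
    · exact hcon q a hx1
    rw [hx0, hx1] at harc0
    exact harc0
  obtain ⟨p, a, hpa⟩ := step1
  -- consecutive indices
  have hq1lt : ((p : ℕ) + 1) % n < n := Nat.mod_lt _ (by omega)
  set q1 : Fin n := ⟨((p : ℕ) + 1) % n, hq1lt⟩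
  have hq2lt : ((q1 : ℕ) + 1) % n < n := Nat.mod_lt _ (by omega)
  set q2 : Fin n := ⟨((q1 : ℕ) + 1) % n, hq2lt⟩
  have harc1 := harc p
  have harc2 := harc q1
  have hq1 : q1 ≠ p := by
    intro h
    exact mod_ne_one n p h2 p.isLt (by simpa using congrArg Fin.val h)
  have hq2 : q2 ≠ p := by
    intro h
    have : (((p : ℕ) + 1) % n + 1) % n = p := congrArg Fin.val h
    rw [Nat.mod_add_mod] at this
    exact mod_ne_two n p h3 p.isLt (by simpa using this)
  have hfin : ∀ r : Fin n, r ≠ p → (∃ b, l.get r = Sum.inl b) →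
      ∃ a b : Fin (2 * k - 1), a ≠ b ∧ Sum.inl a ∈ l ∧ Sum.inl b ∈ l := by
    rintro r hr ⟨b, hb⟩
    refine ⟨a, b, ?_, ?_, ?_⟩
    · intro hab
      apply hr
      apply hnd.get_inj_iff.mp
      rw [hpa, hb, hab]
    · rw [← hpa]; exact l.get_mem _
    · rw [← hb]; exact l.get_mem _
  rcases hx1 : l.get q1 with b | y
  · exact hfin q1 hq1 ⟨b, hx1⟩
  rcases hx2 : l.get q2 with b | y'
  · exact hfin q2 hq2 ⟨b, hx2⟩
  · rw [hx1, hx2] at harc2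
    exact harc2.elim

/-- **Sharpness of Conjecture 8.** For every `k ≥ 1`, the digraph `D₂` of order
`n = 3k` has `δ⁰(D₂) = 2k − 1 = 2n/3 − 1` but contains no `k` pairwise
vertex-disjoint directed cycles each of order at least `3`. -/
theorem stmt16 (k : ℕ) (hk : 1 ≤ k) :
    Fintype.card (Fin (2 * k - 1) ⊕ Fin (k + 1)) = 3 * k ∧
    minSemiDeg (D2 k) = 2 * k - 1 ∧
    (2 * (k : ℚ) - 1 = 2 * (3 * (k : ℚ)) / 3 - 1) ∧
    ¬ ∃ c : Fin k → List (Fin (2 * k - 1) ⊕ Fin (k + 1)),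
        (∀ i, IsDicycle (D2 k) (c i) ∧ 3 ≤ (c i).length) ∧
        (∀ i j, i ≠ j → ∀ v ∈ c i, v ∉ c j) := by
  refine ⟨by simp [Fintype.card_sum]; omega, minSemi k hk, by ring, ?_⟩
  rintro ⟨c, hc, hdisj⟩
  -- for each i, finset of X-vertices in c i
  set F : Fin k → Finset (Fin (2 * k - 1)) := fun i => ((c i).filterMap Sum.getLeft?).toFinset
    with hF
  have hmemF : ∀ i x, x ∈ F i ↔ Sum.inl x ∈ c i := by
    intro i x
    simp only [hF, List.mem_toFinset, List.mem_filterMap]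
    constructor
    · rintro ⟨v, hv, hvx⟩
      cases v with
      | inl a => simp [Sum.getLeft?] at hvx; rwa [← hvx]
      | inr b => simp [Sum.getLeft?] at hvx
    · intro h; exact ⟨Sum.inl x, h, rfl⟩
  have hcard : ∀ i, 2 ≤ (F i).card := by
    intro i
    obtain ⟨a, b, hab, ha, hb⟩ := two_inl k (c i) (hc i).1 (hc i).2
    have : ({a, b} : Finset (Fin (2*k-1))) ⊆ F i := by
      intro x hx
      rcases Finset.mem_insert.mp hx with rfl | hx
      · exact (hmemF i x).mpr ha
      · rw [Finset.mem_singleton.mp hx]; exact (hmemF i b).mpr hb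
    calc 2 = ({a, b} : Finset (Fin (2*k-1))).card := (Finset.card_pair hab).symm
      _ ≤ (F i).card := Finset.card_le_card this
  have hdisjF : ∀ i j : Fin k, i ≠ j → Disjoint (F i) (F j) := by
    intro i j hij
    rw [Finset.disjoint_left]
    intro x hxi hxj
    exact hdisj i j hij _ ((hmemF i x).mp hxi) ((hmemF j x).mp hxj)
  have hbig : 2 * k ≤ (Finset.univ.biUnion F).card := by
    rw [Finset.card_biUnion (fun i _ j _ h => hdisjF i j h)]
    calc 2 * k = ∑ _i : Fin k, 2 := by simp [Finset.sum_const, mul_comm]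
      _ ≤ ∑ i, (F i).card := Finset.sum_le_sum fun i _ => hcard i
  have hsmall : (Finset.univ.biUnion F).card ≤ 2 * k - 1 := by
    calc (Finset.univ.biUnion F).card ≤ Fintype.card (Fin (2*k-1)) := Finset.card_le_univ _
      _ = 2 * k - 1 := Fintype.card_fin _
  omega
end
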